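/- Let P, Q, R be probability measures on a measurable space, all absolutely continuous with respect to a common σ-finite measure μ, let p ∈ [0,1], and let α ≥ 1. Then H_α( p·P + (1−p)·R , p·Q + (1−p)·R ) ≤ p·H_α(P,Q). -/
import Mathlib


open MeasureTheory

/-- **Joint-convexity / mixture bound for the hockey-stick divergence.** Let `P, Q, R` be
probability measures with densities `f`, `g`, `r` with respect to a common σ-finite measure `μ`,
let `p₀ ∈ [0,1]` and `α ≥ 1`. Then
`H_α(p₀·P + (1−p₀)·R, p₀·Q + (1−p₀)·R) ≤ p₀·H_α(P,Q)`, where the mixtures have densities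
`p₀·f + (1−p₀)·r` and `p₀·g + (1−p₀)·r`. -/
theorem hockeyStick_mixture_le
    {X : Type*} [MeasurableSpace X] (μ : Measure X) [SigmaFinite μ]
    (P Q R : Measure X)
    [IsProbabilityMeasure P] [IsProbabilityMeasure Q] [IsProbabilityMeasure R]
    (f g r : X → ℝ) (hf : Measurable f) (hg : Measurable g) (hr : Measurable r)
    (hf0 : ∀ x, 0 ≤ f x) (hg0 : ∀ x, 0 ≤ g x) (hr0 : ∀ x, 0 ≤ r x)
    (hP : P = μ.withDensity fun x => ENNReal.ofReal (f x))
    (hQ : Q = μ.withDensity fun x => ENNReal.ofReal (g x))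
    (hR : R = μ.withDensity fun x => ENNReal.ofReal (r x))
    (p₀ : ℝ) (hp₀ : p₀ ∈ Set.Icc (0 : ℝ) 1)
    (α : ℝ) (hα : 1 ≤ α) :
    (∫ x, max ((p₀ * f x + (1 - p₀) * r x) - α * (p₀ * g x + (1 - p₀) * r x)) 0 ∂μ) ≤
      p₀ * ∫ x, max (f x - α * g x) 0 ∂μ := by
  obtain ⟨hp0, hp1⟩ := hp₀
  -- f is integrable
  have hfint : Integrable f μ := by
    refine ⟨hf.aestronglyMeasurable, ?_⟩
    rw [hasFiniteIntegral_iff_ofReal (Filter.Eventually.of_forall hf0)]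
    have : ∫⁻ x, ENNReal.ofReal (f x) ∂μ = P Set.univ := by
      rw [hP, withDensity_apply _ MeasurableSet.univ, Measure.restrict_univ]
    rw [this, measure_univ]
    exact ENNReal.one_lt_top
  -- max (f - α g) 0 is integrable
  have hmax : Integrable (fun x => max (f x - α * g x) 0) μ := by
    refine hfint.mono ((hf.sub (measurable_const.mul hg)).max measurable_const).aestronglyMeasurable
      (Filter.Eventually.of_forall fun x => ?_)
    rw [Real.norm_eq_abs, Real.norm_eq_abs, abs_of_nonneg (le_max_right _ _),
      abs_of_nonneg (hf0 x)]
    rcases le_or_gt (f x - α * g x) 0 with h | h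
    · simpa [max_eq_right h] using hf0 x
    · rw [max_eq_left h.le]
      nlinarith [hg0 x]
  have hrhsint : Integrable (fun x => p₀ * max (f x - α * g x) 0) μ := hmax.const_mul _
  calc (∫ x, max ((p₀ * f x + (1 - p₀) * r x) - α * (p₀ * g x + (1 - p₀) * r x)) 0 ∂μ)
      ≤ ∫ x, p₀ * max (f x - α * g x) 0 ∂μ := by
        refine integral_mono_of_nonneg (Filter.Eventually.of_forall fun x => le_max_right _ _)
          hrhsint (Filter.Eventually.of_forall fun x => ?_)
        have h1 : p₀ * f x + (1 - p₀) * r x - α * (p₀ * g x + (1 - p₀) * r x)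
            = p₀ * (f x - α * g x) + (1 - p₀) * (1 - α) * r x := by ring
        have h2 : (1 - p₀) * (1 - α) * r x ≤ 0 :=
          mul_nonpos_of_nonpos_of_nonneg (by nlinarith [mul_nonneg (by linarith : (0:ℝ) ≤ 1 - p₀) (by linarith : (0:ℝ) ≤ α - 1)]) (hr0 x)
        have h3 : p₀ * (f x - α * g x) ≤ p₀ * max (f x - α * g x) 0 :=
          mul_le_mul_of_nonneg_left (le_max_left _ _) hp0
        refine max_le (by dsimp only; rw [h1]; linarith) (mul_nonneg hp0 (le_max_right _ _))
    _ = p₀ * ∫ x, max (f x - α * g x) 0 ∂μ := integral_const_mul _ _
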